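/- Let F be a finite field with q elements and characteristic different from 2, and let t = diag(1, 1, 1, -1) ∈ GL_4(F). The number of involutions x ∈ GL_4(F) with x ≠ t, rank(x - 1) = 1, and xt = tx equals q⁴ + q³ + q². -/

import Mathlib

set_option linter.unusedSectionVars false

open Matrix

namespace Stmt18

variable {F : Type*} [Field F] [Fintype F] [DecidableEq F]

def tv (F : Type*) [Field F] : Fin 4 → F := fun i => if (i : ℕ) < 3 then 1 else -1

lemma tv3 : tv F 3 = -1 := by
  show (if ((3 : Fin 4) : ℕ) < 3 then (1 : F) else -1) = -1
  rw [if_neg (by decide)]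

lemma tv_lt {i : Fin 4} (h : (i : ℕ) < 3) : tv F i = 1 := by simp [tv, h]

lemma eq_three (i : Fin 4) (h : ¬ (i : ℕ) < 3) : i = 3 := by
  fin_cases i <;> simp_all

lemma vmv_mul (v w v' w' : Fin 4 → F) :
    vecMulVec v w * vecMulVec v' w' = (w ⬝ᵥ v') • vecMulVec v w' := by
  ext i j
  simp only [mul_apply, vecMulVec_apply, Matrix.smul_apply, smul_eq_mul, dotProduct]
  rw [Finset.sum_mul]
  exact Finset.sum_congr rfl fun k _ => by ring

lemma vmv_mulVec (v w u : Fin 4 → F) :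
    (vecMulVec v w) *ᵥ u = (w ⬝ᵥ u) • v := by
  ext i
  simp only [mulVec, dotProduct, vecMulVec_apply, Pi.smul_apply, smul_eq_mul]
  rw [Finset.sum_mul]
  exact Finset.sum_congr rfl fun k _ => by ring

lemma vmv_rank_one (v w : Fin 4 → F) (hv : v ≠ 0) (hw : w ≠ 0) :
    (vecMulVec v w).rank = 1 := by
  obtain ⟨j, hj0⟩ := Function.ne_iff.mp hw
  have hj : w j ≠ 0 := by simpa using hj0
  rw [Matrix.rank, finrank_eq_one_iff']
  refine ⟨⟨w j • v, ?_⟩, ?_, ?_⟩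
  · refine ⟨Pi.single j 1, ?_⟩
    rw [mulVecLin_apply, vmv_mulVec, dotProduct_single, mul_one]
  · intro h0
    exact smul_ne_zero hj hv (by simpa using congrArg Subtype.val h0)
  · rintro ⟨y, u, rfl⟩
    refine ⟨(w ⬝ᵥ u) * (w j)⁻¹, ?_⟩
    apply Subtype.ext
    show ((w ⬝ᵥ u) * (w j)⁻¹) • (w j • v) = (vecMulVec v w).mulVecLin u
    rw [mulVecLin_apply, vmv_mulVec, smul_smul, mul_assoc, inv_mul_cancel₀ hj, mul_one]

lemma exists_vmv_of_rank_one (M : Matrix (Fin 4) (Fin 4) F) (h : M.rank = 1) :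
    ∃ v w : Fin 4 → F, v ≠ 0 ∧ w ≠ 0 ∧ M = vecMulVec v w := by
  have h' := h
  rw [Matrix.rank, finrank_eq_one_iff'] at h
  obtain ⟨⟨v, hvmem⟩, hv0, hspan⟩ := h
  choose c hc using fun j => hspan ⟨M *ᵥ Pi.single j 1, LinearMap.mem_range_self _ _⟩
  have hM : M = vecMulVec v c := by
    ext i j
    have := congrFun (congrArg (Subtype.val) (hc j)) i
    simp only [SetLike.mk_smul_mk, mulVecLin_apply] at this
    rw [mulVec_single] at this
    simp only [Pi.smul_apply, smul_eq_mul, mul_one, MulOpposite.op_one, one_smul, Matrix.col_apply] at this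
    rw [vecMulVec_apply, ← this, mul_comm]
  refine ⟨v, c, by simpa using hv0, ?_, hM⟩
  rintro rfl
  rw [hM] at h'
  simp only [show vecMulVec v (0 : Fin 4 → F) = 0 by ext i j; simp [vecMulVec_apply]] at h'
  rw [Matrix.rank_zero] at h'
  exact one_ne_zero h'.symm

def IsSol (x : Matrix (Fin 4) (Fin 4) F) : Prop :=
  x * x = 1 ∧ x ≠ diagonal (tv F) ∧ (x - 1).rank = 1 ∧
    x * diagonal (tv F) = diagonal (tv F) * x

def PT (F : Type*) := (F × F × F × F) ⊕ (F × F × F) ⊕ (F × F)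

def pv : PT F → (Fin 4 → F)
  | .inl (a, b, _, _) => ![1, a, b, 0]
  | .inr (.inl (b, _, _)) => ![0, 1, b, 0]
  | .inr (.inr _) => ![0, 0, 1, 0]

def pw : PT F → (Fin 4 → F)
  | .inl (a, b, c, d) => ![-2 - c*a - d*b, c, d, 0]
  | .inr (.inl (b, c, d)) => ![c, -2 - d*b, d, 0]
  | .inr (.inr (c, d)) => ![c, d, -2, 0]

def pf (p : PT F) : Matrix (Fin 4) (Fin 4) F := 1 + vecMulVec (pv p) (pw p)

lemma pv3 (p : PT F) : pv p 3 = 0 := by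
  rcases p with ⟨a, b, c, d⟩ | ⟨b, c, d⟩ | ⟨c, d⟩ <;> simp [pv]

lemma pw3 (p : PT F) : pw p 3 = 0 := by
  rcases p with ⟨a, b, c, d⟩ | ⟨b, c, d⟩ | ⟨c, d⟩ <;> simp [pw]

lemma pdot (p : PT F) : pw p ⬝ᵥ pv p = -2 := by
  rcases p with ⟨a, b, c, d⟩ | ⟨b, c, d⟩ | ⟨c, d⟩ <;>
    (simp [pv, pw, dotProduct, Fin.sum_univ_four]; try ring)

def Mon (v : Fin 4 → F) : Prop :=
  v 0 = 1 ∨ (v 0 = 0 ∧ v 1 = 1) ∨ (v 0 = 0 ∧ v 1 = 0 ∧ v 2 = 1)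

lemma mon_pv (p : PT F) : Mon (pv p) := by
  rcases p with ⟨a, b, c, d⟩ | ⟨b, c, d⟩ | ⟨c, d⟩ <;> simp [pv, Mon]

section main
variable (hF : ringChar F ≠ 2)
include hF

lemma two_ne : (2 : F) ≠ 0 := Ring.two_ne_zero hF

lemma dot_v_ne (v w : Fin 4 → F) (hdot : w ⬝ᵥ v = -2) : v ≠ 0 := by
  rintro rfl
  rw [dotProduct_zero] at hdot
  exact two_ne hF (by linear_combination hdot)

lemma dot_w_ne (v w : Fin 4 → F) (hdot : w ⬝ᵥ v = -2) : w ≠ 0 := by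
  rintro rfl
  rw [zero_dotProduct] at hdot
  exact two_ne hF (by linear_combination hdot)

lemma mem_sol (v w : Fin 4 → F) (hdot : w ⬝ᵥ v = -2)
    (hv3 : v 3 = 0) (hw3 : w 3 = 0) : IsSol (1 + vecMulVec v w) := by
  have hv : v ≠ 0 := dot_v_ne hF v w hdot
  have hw : w ≠ 0 := dot_w_ne hF v w hdot
  set M := vecMulVec v w with hMd
  refine ⟨?_, ?_, ?_, ?_⟩
  · have e : (1 + M) * (1 + M) = 1 + (M + M + M * M) := by noncomm_ring
    rw [e, hMd, vmv_mul, hdot, ← hMd]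
    have h2 : M + M + (-2 : F) • M = 0 := by
      rw [neg_smul, two_smul]
      abel
    rw [h2, add_zero]
  · intro h
    have := congrFun (congrFun h 3) 3
    rw [Matrix.add_apply, Matrix.one_apply_eq, hMd, vecMulVec_apply, hv3, hw3, mul_zero,
      add_zero, diagonal_apply_eq, tv3] at this
    exact two_ne hF (by linear_combination this)
  · rw [add_sub_cancel_left]
    exact vmv_rank_one v w hv hw
  · have key : M * diagonal (tv F) = diagonal (tv F) * M := by
      ext i j
      rw [mul_diagonal, diagonal_mul, hMd, vecMulVec_apply]
      by_cases hi : (i : ℕ) < 3 <;> by_cases hj : (j : ℕ) < 3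
      · rw [tv_lt hi, tv_lt hj]; ring
      · rw [eq_three j hj, hw3]; ring
      · rw [eq_three i hi, hv3]; ring
      · rw [eq_three i hi, hv3]; ring
    rw [add_mul, mul_add, one_mul, mul_one, key]

lemma pf_mem (p : PT F) : IsSol (pf p) :=
  mem_sol hF _ _ (pdot p) (pv3 p) (pw3 p)

lemma vmv_cancel (v w v' w' : Fin 4 → F) (hmv : Mon v) (hmv' : Mon v')
    (hw : w ≠ 0) (hw' : w' ≠ 0)
    (h : vecMulVec v w = vecMulVec v' w') : v = v' ∧ w = w' := by
  have he : ∀ i j, v i * w j = v' i * w' j := fun i j => by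
    have := congrFun (congrFun h i) j
    rwa [vecMulVec_apply, vecMulVec_apply] at this
  obtain ⟨j, hj0⟩ := Function.ne_iff.mp hw
  have hj : w j ≠ 0 := by simpa using hj0
  obtain ⟨k, hk1⟩ : ∃ k, v k = 1 := by
    rcases hmv with h1 | ⟨_, h1⟩ | ⟨_, _, h1⟩
    exacts [⟨0, h1⟩, ⟨1, h1⟩, ⟨2, h1⟩]
  have hwj' : w' j ≠ 0 := by
    intro h0
    have := he k j
    rw [h0, mul_zero, hk1, one_mul] at this
    exact hj this
  set c := w j * (w' j)⁻¹ with hcd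
  have hc : ∀ i, v i * c = v' i := fun i => by
    rw [hcd, ← mul_assoc, he i j, mul_assoc, mul_inv_cancel₀ hwj', mul_one]
  have hc0 : c ≠ 0 := mul_ne_zero hj (inv_ne_zero hwj')
  have hveq : v = v' := by
    have hc1 : c = 1 := by
      rcases hmv with h1 | ⟨h0, h1⟩ | ⟨h0, h1, h2⟩ <;>
        rcases hmv' with g1 | ⟨g0, g1⟩ | ⟨g0, g1, g2⟩
      · have := hc 0; rwa [h1, one_mul, g1] at this
      · have := hc 0; rw [h1, one_mul, g0] at this; exact absurd this hc0
      · have := hc 0; rw [h1, one_mul, g0] at this; exact absurd this hc0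
      · have := hc 0; rw [h0, zero_mul, g1] at this; exact absurd this.symm one_ne_zero
      · have := hc 1; rwa [h1, one_mul, g1] at this
      · have := hc 1; rw [h1, one_mul, g1] at this; exact absurd this hc0
      · have := hc 0; rw [h0, zero_mul, g1] at this; exact absurd this.symm one_ne_zero
      · have := hc 1; rw [h1, zero_mul, g1] at this; exact absurd this.symm one_ne_zero
      · have := hc 2; rwa [h2, one_mul, g2] at this
    funext i
    rw [← hc i, hc1, mul_one]
  refine ⟨hveq, ?_⟩
  funext j'
  have := he k j'
  rwa [hk1, one_mul, ← hveq, hk1, one_mul] at this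

lemma pf_inj : Function.Injective (pf (F := F)) := by
  intro p p' h
  have h' : vecMulVec (pv p) (pw p) = vecMulVec (pv p') (pw p') := by
    rwa [pf, pf, add_right_inj] at h
  obtain ⟨hveq, hweq⟩ := vmv_cancel hF _ _ _ _ (mon_pv p) (mon_pv p')
    (dot_w_ne hF _ _ (pdot p)) (dot_w_ne hF _ _ (pdot p')) h'
  rcases p with ⟨a, b, c, d⟩ | ⟨b, c, d⟩ | ⟨c, d⟩ <;>
    rcases p' with ⟨a', b', c', d'⟩ | ⟨b', c', d'⟩ | ⟨c', d'⟩ <;>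
    simp only [pv, pw] at hveq hweq
  · have e1 := congrFun hveq 1; have e2 := congrFun hveq 2
    have f1 := congrFun hweq 1; have f2 := congrFun hweq 2
    simp at e1 e2 f1 f2
    subst_vars; rfl
  · have := congrFun hveq 0; simp at this
  · have := congrFun hveq 0; simp at this
  · have := congrFun hveq 0; simp at this
  · have e2 := congrFun hveq 2
    have f0 := congrFun hweq 0; have f2 := congrFun hweq 2
    simp at e2 f0 f2
    subst_vars; rfl
  · have := congrFun hveq 1; simp at this
  · have := congrFun hveq 0; simp at this
  · have := congrFun hveq 1; simp at this
  · have f0 := congrFun hweq 0; have f1 := congrFun hweq 1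
    simp at f0 f1
    subst_vars; rfl

lemma pf_surj (x : Matrix (Fin 4) (Fin 4) F) (hx : IsSol x) : ∃ p : PT F, pf p = x := by
  obtain ⟨hsq, hne, hrk, hcomm⟩ := hx
  obtain ⟨v, w, hv, hw, hM⟩ := exists_vmv_of_rank_one _ hrk
  have hx1 : x = 1 + vecMulVec v w := by rw [← hM]; abel
  -- the dot product is -2
  obtain ⟨i0, hi0'⟩ := Function.ne_iff.mp hv
  have hi0 : v i0 ≠ 0 := by simpa using hi0'
  obtain ⟨j0, hj0'⟩ := Function.ne_iff.mp hw
  have hj0 : w j0 ≠ 0 := by simpa using hj0'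
  have hdot : w ⬝ᵥ v = -2 := by
    have E := hsq
    rw [hx1] at E
    have e1 : (1 + vecMulVec v w) * (1 + vecMulVec v w)
        = 1 + (vecMulVec v w + vecMulVec v w + vecMulVec v w * vecMulVec v w) := by
      noncomm_ring
    rw [e1, vmv_mul] at E
    have E2 : vecMulVec v w + vecMulVec v w + (w ⬝ᵥ v) • vecMulVec v w = 0 :=
      add_eq_left.mp E
    have E3 := congrFun (congrFun E2 i0) j0
    simp only [Matrix.add_apply, Matrix.smul_apply, vecMulVec_apply, smul_eq_mul,
      Matrix.zero_apply] at E3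
    have E4 : (w ⬝ᵥ v + 2) * (v i0 * w j0) = 0 := by linear_combination E3
    rcases mul_eq_zero.mp E4 with h | h
    · linear_combination h
    · exact absurd h (mul_ne_zero hi0 hj0)
  -- commutation relations
  have hMc : vecMulVec v w * diagonal (tv F) = diagonal (tv F) * vecMulVec v w := by
    have h := hcomm
    rw [hx1, add_mul, mul_add, one_mul, mul_one, add_right_inj] at h
    exact h
  have key : ∀ i j : Fin 4, v i * w j * tv F j = tv F i * (v i * w j) := fun i j => by
    have := congrFun (congrFun hMc i) j
    rwa [mul_diagonal, diagonal_mul, vecMulVec_apply] at this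
  have hA : ∀ i : Fin 4, (i : ℕ) < 3 → v i * w 3 = 0 := by
    intro i hi
    have h1 := key i 3
    rw [tv3, tv_lt hi, one_mul] at h1
    have h2 : (2 : F) * (v i * w 3) = 0 := by linear_combination -h1
    rcases mul_eq_zero.mp h2 with h | h
    · exact absurd h (two_ne hF)
    · exact h
  have hB : ∀ j : Fin 4, (j : ℕ) < 3 → v 3 * w j = 0 := by
    intro j hj
    have h1 := key 3 j
    rw [tv3, tv_lt hj, mul_one] at h1
    have h2 : (2 : F) * (v 3 * w j) = 0 := by linear_combination h1
    rcases mul_eq_zero.mp h2 with h | h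
    · exact absurd h (two_ne hF)
    · exact h
  by_cases hv3 : v 3 = 0
  · -- main case
    have hw3 : w 3 = 0 := by
      have hi0lt : (i0 : ℕ) < 3 := by
        by_contra hcon
        rw [eq_three i0 hcon] at hi0
        exact hi0 hv3
      rcases mul_eq_zero.mp (hA i0 hi0lt) with h | h
      · exact absurd h hi0
      · exact h
    have hd4 : w 0 * v 0 + w 1 * v 1 + w 2 * v 2 = -2 := by
      have h := hdot
      rw [dotProduct, Fin.sum_univ_four, hv3, mul_zero, add_zero] at h
      exact h
    by_cases h0 : v 0 = 0
    · by_cases h1 : v 1 = 0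
      · -- pivot at 2
        have h2 : v 2 ≠ 0 := by
          intro h2
          apply hv
          funext i
          fin_cases i <;> simpa [h0, h1, h2]
        refine ⟨.inr (.inr (w 0 * v 2, w 1 * v 2)), ?_⟩
        unfold pf
        rw [hx1]
        congr 1
        ext i j
        rw [vecMulVec_apply, vecMulVec_apply]
        have hVi : pv (Sum.inr (Sum.inr (w 0 * v 2, w 1 * v 2)) : PT F) i = (v 2)⁻¹ * v i := by
          fin_cases i <;> simp [pv, h0, h1, hv3] <;> field_simp
        have hWj : pw (Sum.inr (Sum.inr (w 0 * v 2, w 1 * v 2)) : PT F) j = v 2 * w j := by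
          fin_cases j <;> simp [pw, hw3]
          · ring
          · ring
          · -- -2 = v 2 * w 2
            rw [h0, h1] at hd4
            linear_combination -hd4
        rw [hVi, hWj]
        calc ((v 2)⁻¹ * v i) * (v 2 * w j) = ((v 2)⁻¹ * v 2) * (v i * w j) := by ring
          _ = v i * w j := by rw [inv_mul_cancel₀ h2, one_mul]
      · -- pivot at 1
        refine ⟨.inr (.inl (v 2 * (v 1)⁻¹, w 0 * v 1, w 2 * v 1)), ?_⟩
        unfold pf
        rw [hx1]
        congr 1
        ext i j
        rw [vecMulVec_apply, vecMulVec_apply]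
        have hVi : pv (Sum.inr (Sum.inl (v 2 * (v 1)⁻¹, w 0 * v 1, w 2 * v 1)) : PT F) i
            = (v 1)⁻¹ * v i := by
          fin_cases i <;> simp [pv, h0, hv3] <;> field_simp
        have hWj : pw (Sum.inr (Sum.inl (v 2 * (v 1)⁻¹, w 0 * v 1, w 2 * v 1)) : PT F) j
            = v 1 * w j := by
          fin_cases j <;> simp [pw, hw3]
          · ring
          · -- -2 - w 2 * v 1 * (v 2 * (v 1)⁻¹) = v 1 * w 1
            rw [h0] at hd4
            have hcan : w 2 * v 1 * (v 2 * (v 1)⁻¹) = w 2 * v 2 := by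
              field_simp
            rw [hcan]
            linear_combination -hd4
          · ring
        rw [hVi, hWj]
        calc ((v 1)⁻¹ * v i) * (v 1 * w j) = ((v 1)⁻¹ * v 1) * (v i * w j) := by ring
          _ = v i * w j := by rw [inv_mul_cancel₀ h1, one_mul]
    · -- pivot at 0
      refine ⟨.inl (v 1 * (v 0)⁻¹, v 2 * (v 0)⁻¹, w 1 * v 0, w 2 * v 0), ?_⟩
      unfold pf
      rw [hx1]
      congr 1
      ext i j
      rw [vecMulVec_apply, vecMulVec_apply]
      have hVi : pv (Sum.inl (v 1 * (v 0)⁻¹, v 2 * (v 0)⁻¹, w 1 * v 0, w 2 * v 0) : PT F) i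
          = (v 0)⁻¹ * v i := by
        fin_cases i <;> simp [pv, hv3] <;> field_simp
      have hWj : pw (Sum.inl (v 1 * (v 0)⁻¹, v 2 * (v 0)⁻¹, w 1 * v 0, w 2 * v 0) : PT F) j
          = v 0 * w j := by
        fin_cases j <;> simp [pw, hw3]
        · -- -2 - w 1 * v 0 * (v 1 * (v 0)⁻¹) - w 2 * v 0 * (v 2 * (v 0)⁻¹) = v 0 * w 0
          have c1 : w 1 * v 0 * (v 1 * (v 0)⁻¹) = w 1 * v 1 := by
            field_simp
          have c2 : w 2 * v 0 * (v 2 * (v 0)⁻¹) = w 2 * v 2 := by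
            field_simp
          rw [c1, c2]
          linear_combination -hd4
        · ring
        · ring
      rw [hVi, hWj]
      calc ((v 0)⁻¹ * v i) * (v 0 * w j) = ((v 0)⁻¹ * v 0) * (v i * w j) := by ring
        _ = v i * w j := by rw [inv_mul_cancel₀ h0, one_mul]
  · -- degenerate case: x = t, contradiction
    exfalso
    apply hne
    have hwj : ∀ j : Fin 4, (j : ℕ) < 3 → w j = 0 := fun j hj => by
      rcases mul_eq_zero.mp (hB j hj) with h | h
      · exact absurd h hv3
      · exact h
    have hw3 : w 3 ≠ 0 := by
      intro hcon
      apply hw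
      funext j
      by_cases hj : (j : ℕ) < 3
      · simpa using hwj j hj
      · rw [eq_three j hj, hcon]; rfl
    have hvi : ∀ i : Fin 4, (i : ℕ) < 3 → v i = 0 := fun i hi => by
      rcases mul_eq_zero.mp (hA i hi) with h | h
      · exact h
      · exact absurd h hw3
    have hd : w 3 * v 3 = -2 := by
      have h := hdot
      rw [dotProduct, Fin.sum_univ_four, hvi 0 (by norm_num), hvi 1 (by norm_num),
        hvi 2 (by norm_num)] at h
      simpa using h
    rw [hx1]
    ext i j
    rw [Matrix.add_apply, vecMulVec_apply]
    by_cases hi : (i : ℕ) < 3 <;> by_cases hj : (j : ℕ) < 3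
    · rw [hvi i hi, zero_mul, add_zero]
      by_cases hij : i = j
      · subst hij
        rw [Matrix.one_apply_eq, diagonal_apply_eq, tv_lt hi]
      · rw [Matrix.one_apply_ne hij, diagonal_apply_ne _ hij]
    · have hij : i ≠ j := fun h => hj (h ▸ hi)
      rw [hvi i hi, zero_mul, add_zero, Matrix.one_apply_ne hij, diagonal_apply_ne _ hij]
    · have hij : i ≠ j := fun h => hi (h ▸ hj)
      rw [hwj j hj, mul_zero, add_zero, Matrix.one_apply_ne hij, diagonal_apply_ne _ hij]
    · rw [eq_three i hi, eq_three j hj, Matrix.one_apply_eq, diagonal_apply_eq, tv3]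
      linear_combination hd

lemma card_sol :
    Nat.card {x : Matrix (Fin 4) (Fin 4) F // IsSol x} =
      (Fintype.card F) ^ 4 + (Fintype.card F) ^ 3 + (Fintype.card F) ^ 2 := by
  have e : PT F ≃ {x : Matrix (Fin 4) (Fin 4) F // IsSol x} :=
    Equiv.ofBijective (fun p => ⟨pf p, pf_mem hF p⟩)
      ⟨fun p p' h => pf_inj hF (congrArg Subtype.val h),
       fun ⟨x, hx⟩ => by
        obtain ⟨p, hp⟩ := pf_surj hF x hx
        exact ⟨p, Subtype.ext hp⟩⟩
  rw [← Nat.card_congr e]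
  show Nat.card ((F × F × F × F) ⊕ (F × F × F) ⊕ (F × F)) = _
  rw [Nat.card_eq_fintype_card]
  simp only [Fintype.card_sum, Fintype.card_prod]
  ring

end main

end Stmt18

theorem stmt_18 {F : Type*} [Field F] [Fintype F] [DecidableEq F]
    (hF : ringChar F ≠ 2) :
    Nat.card {x : Matrix (Fin 4) (Fin 4) F //
        x * x = 1 ∧
        x ≠ Matrix.diagonal (fun i : Fin 4 => if (i : ℕ) < 3 then (1 : F) else -1) ∧
        (x - 1).rank = 1 ∧
        x * Matrix.diagonal (fun i : Fin 4 => if (i : ℕ) < 3 then (1 : F) else -1) =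
          Matrix.diagonal (fun i : Fin 4 => if (i : ℕ) < 3 then (1 : F) else -1) * x} =
      (Fintype.card F) ^ 4 + (Fintype.card F) ^ 3 + (Fintype.card F) ^ 2 :=
  Stmt18.card_sol hF
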